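/- The cutting-plane model value at the new trial point equals minus the predicted decrease η‖w‖² + σ: if θ* ∈ Δ_n minimizes G over Δ_n, w = Σ_{i=1}^n θ*_i g_i, σ = Σ_{i=1}^n θ*_i α_i, and d* = −η·w, then max_{1≤i≤n} (⟨g_i, d*⟩ − α_i) = −(η‖w‖² + σ). -/
import Mathlib


open RealInnerProductSpace

/-- The dual master problem objective `G(θ) = (η/2)‖Σ θ_i g_i‖² + Σ θ_i α_i`. -/
noncomputable def dualG {m n : ℕ}
    (g : Fin n → EuclideanSpace ℝ (Fin m)) (α : Fin n → ℝ) (η : ℝ)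
    (θ : Fin n → ℝ) : ℝ :=
  (η / 2) * ‖∑ i, θ i • g i‖ ^ 2 + ∑ i, θ i * α i

set_option maxHeartbeats 1000000

/-- The cutting-plane model value at the new trial point equals minus the predicted
decrease: if `θ*` minimizes `G` over the simplex, `w = Σ θ*_i g_i`, `σ = Σ θ*_i α_i`
and `d* = −η·w`, then `max_i (⟨g_i, d*⟩ − α_i) = −(η‖w‖² + σ)`. -/
theorem stmt_9 {m n : ℕ} (hn : 0 < n)
    (g : Fin n → EuclideanSpace ℝ (Fin m)) (α : Fin n → ℝ) (hα : ∀ i, 0 ≤ α i)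
    (η : ℝ) (hη : 0 < η)
    (θs : Fin n → ℝ) (hθs : ∀ i, 0 ≤ θs i) (hθs1 : ∑ i, θs i = 1)
    (hmin : ∀ θ' : Fin n → ℝ, (∀ i, 0 ≤ θ' i) → (∑ i, θ' i = 1) →
      dualG g α η θs ≤ dualG g α η θ') :
    Finset.univ.sup' (Finset.univ_nonempty_iff.mpr (Fin.pos_iff_nonempty.mp hn))
        (fun i => ⟪g i, (-η) • ∑ j, θs j • g j⟫ - α i) =
      -(η * ‖∑ j, θs j • g j‖ ^ 2 + ∑ j, θs j * α j) := by
  set w : EuclideanSpace ℝ (Fin m) := ∑ j, θs j • g j with hw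
  set σ : ℝ := ∑ j, θs j * α j with hσ
  -- First-order optimality: for each i, η‖w‖² + σ ≤ η⟪w, g i⟫ + α i
  have key : ∀ i : Fin n, η * ‖w‖ ^ 2 + σ ≤ η * ⟪w, g i⟫ + α i := by
    intro i
    set A : ℝ := η * ⟪w, g i⟫ + α i - (η * ‖w‖ ^ 2 + σ) with hA
    set B : ℝ := (η / 2) * ‖w‖ ^ 2 - η * ⟪w, g i⟫ + (η / 2) * ‖g i‖ ^ 2 with hB
    have hBnn : 0 ≤ B := by
      have h1 : 0 ≤ ‖w - g i‖ ^ 2 := sq_nonneg _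
      have h2 : ‖w - g i‖ ^ 2 = ‖w‖ ^ 2 - 2 * ⟪w, g i⟫ + ‖g i‖ ^ 2 :=
        norm_sub_sq_real w (g i)
      rw [h2] at h1
      rw [hB]; nlinarith
    have hstep : ∀ t : ℝ, 0 ≤ t → t ≤ 1 → 0 ≤ t * A + t ^ 2 * B := by
      intro t ht0 ht1
      have hmem : ∀ j, 0 ≤ (1 - t) * θs j + t * (if j = i then 1 else 0) := by
        intro j
        have h1 := hθs j
        have : (0:ℝ) ≤ (if j = i then (1:ℝ) else 0) := by positivity
        nlinarith
      have hsum : ∑ j, ((1 - t) * θs j + t * (if j = i then 1 else 0)) = 1 := by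
        rw [Finset.sum_add_distrib, ← Finset.mul_sum, ← Finset.mul_sum, hθs1,
          Finset.sum_ite_eq' Finset.univ i (fun _ => (1:ℝ))]
        simp
      have hopt := hmin _ hmem hsum
      have hvec : ∑ j, ((1 - t) * θs j + t * (if j = i then 1 else 0)) • g j
          = (1 - t) • w + t • g i := by
        simp only [add_smul, Finset.sum_add_distrib, mul_smul, ← Finset.smul_sum]
        congr 1
        rw [Finset.smul_sum]
        rw [show (∑ j, t • ((if j = i then (1:ℝ) else 0) • g j))
            = ∑ j, (if j = i then t • g j else 0) from by
          apply Finset.sum_congr rfl; intro j _; split <;> simp]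
        simp
      have hsca : ∑ j, ((1 - t) * θs j + t * (if j = i then 1 else 0)) * α j
          = (1 - t) * σ + t * α i := by
        simp only [add_mul]
        rw [Finset.sum_add_distrib]
        congr 1
        · rw [hσ, Finset.mul_sum]
          apply Finset.sum_congr rfl; intro j _; ring
        · rw [show (∑ j, (t * (if j = i then (1:ℝ) else 0)) * α j)
              = ∑ j, (if j = i then t * α j else 0) from by
            apply Finset.sum_congr rfl; intro j _; split <;> simp]
          simp
      have hnorm : ‖(1 - t) • w + t • g i‖ ^ 2
          = (1 - t) ^ 2 * ‖w‖ ^ 2 + 2 * ((1 - t) * t) * ⟪w, g i⟫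
            + t ^ 2 * ‖g i‖ ^ 2 := by
        rw [norm_add_sq_real, norm_smul, norm_smul, real_inner_smul_left,
          real_inner_smul_right]
        simp [abs_of_nonneg ht0, abs_of_nonneg (by linarith : (0:ℝ) ≤ 1 - t),
          mul_pow]
        ring
      rw [dualG, dualG, hvec, hsca, hnorm, ← hw, ← hσ] at hopt
      rw [hA, hB]
      nlinarith [hopt]
    by_contra hc
    push_neg at hc
    have hAneg : A < 0 := by rw [hA]; linarith
    set t : ℝ := min 1 (-A / (2 * (B + 1))) with ht
    have ht0 : 0 < t := by
      apply lt_min one_pos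
      apply div_pos (by linarith) (by linarith)
    have ht1 : t ≤ 1 := min_le_left _ _
    have ht2 : t ≤ -A / (2 * (B + 1)) := min_le_right _ _
    have := hstep t (le_of_lt ht0) ht1
    have htB : t * B ≤ -A / 2 := by
      have h1 : t * (B + 1) ≤ -A / 2 := by
        have := mul_le_mul_of_nonneg_right ht2 (by linarith : (0:ℝ) ≤ B + 1)
        rw [div_mul_eq_mul_div, mul_comm] at this
        calc t * (B + 1) ≤ -A * (B + 1) / (2 * (B + 1)) := by
              rw [mul_comm] at this; exact this
          _ = -A / 2 := by
              rw [mul_comm 2 (B+1), ← div_div, mul_div_assoc]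
              rw [div_self (by linarith : (B:ℝ) + 1 ≠ 0)]
              ring
      nlinarith
    have h1 : A + t * B ≤ A / 2 := by linarith
    have h2 : t * (A + t * B) ≤ t * (A / 2) :=
      mul_le_mul_of_nonneg_left h1 ht0.le
    have h3 : t * (A / 2) < 0 := mul_neg_of_pos_of_neg ht0 (by linarith)
    have h4 : t * (A + t * B) = t * A + t ^ 2 * B := by ring
    clear_value t A B
    linarith
  -- weighted average equals the target value
  have havg : ∑ j, θs j * (⟪g j, (-η) • w⟫ - α j) = -(η * ‖w‖ ^ 2 + σ) := by
    have hinner : ⟪w, w⟫ = ‖w‖ ^ 2 := real_inner_self_eq_norm_sq w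
    have hsum : ∑ j, θs j * ⟪g j, w⟫ = ‖w‖ ^ 2 := by
      rw [← hinner, hw]
      rw [sum_inner]
      apply Finset.sum_congr rfl
      intro j _
      rw [real_inner_smul_left]
    calc ∑ j, θs j * (⟪g j, (-η) • w⟫ - α j)
        = ∑ j, (-η * (θs j * ⟪g j, w⟫) - θs j * α j) := by
          apply Finset.sum_congr rfl; intro j _
          rw [real_inner_smul_right]; ring
      _ = -η * (∑ j, θs j * ⟪g j, w⟫) - σ := by
          rw [Finset.sum_sub_distrib, ← Finset.mul_sum, hσ]
      _ = -(η * ‖w‖ ^ 2 + σ) := by rw [hsum]; ring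
  apply le_antisymm
  · apply Finset.sup'_le
    intro i _
    have hki := key i
    have h2 : ⟪g i, (-η) • w⟫ = -η * ⟪w, g i⟫ := by
      rw [real_inner_smul_right, real_inner_comm]
    rw [h2]; linarith
  · have hne := Finset.univ_nonempty_iff.mpr (Fin.pos_iff_nonempty.mp hn)
    set S := Finset.univ.sup' hne (fun i => ⟪g i, (-η) • w⟫ - α i) with hS
    have hle : ∀ j : Fin n, θs j * (⟪g j, (-η) • w⟫ - α j) ≤ θs j * S := by
      intro j
      exact mul_le_mul_of_nonneg_left
        (Finset.le_sup' (fun i => ⟪g i, (-η) • w⟫ - α i) (Finset.mem_univ j))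
        (hθs j)
    have : ∑ j, θs j * (⟪g j, (-η) • w⟫ - α j) ≤ ∑ j, θs j * S :=
      Finset.sum_le_sum fun j _ => hle j
    rw [havg, ← Finset.sum_mul, hθs1, one_mul] at this
    exact this
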